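/- Let f be a nonconstant function in the real disc algebra A_ℝ(D) and suppose there exists a sequence of real numbers x_n converging to 0 with x_n not in the image f(D̄) of the closed unit disc under f. Then f has no zeros in the open unit disc, and f has constant sign on the open interval (-1,1): either f(x) > 0 for all x ∈ (-1,1) or f(x) < 0 for all x ∈ (-1,1). -/

import Mathlib

open Complex Metric ComplexConjugate

/-- The real disc algebra `A_ℝ(D)`: functions continuous on the closed unit disc,
holomorphic on the open unit disc, satisfying `f z = conj (f (conj z))` on the closed disc. -/
def IsRDisc (f : ℂ → ℂ) : Prop :=
  ContinuousOn f (closedBall (0 : ℂ) 1) ∧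
  DifferentiableOn ℂ f (ball (0 : ℂ) 1) ∧
  ∀ z ∈ closedBall (0 : ℂ) 1, f z = conj (f (conj z))

/-- A unit of `A_ℝ(D)`: a member of the algebra with no zeros on the closed unit disc. -/
def IsRDiscUnit (f : ℂ → ℂ) : Prop :=
  IsRDisc f ∧ ∀ z ∈ closedBall (0 : ℂ) 1, f z ≠ 0

/-- The pair `(f, g)` is invertible in `A_ℝ(D)`: there are `α, β` in the algebra with
`α f + β g = 1` on the closed unit disc. -/
def BezoutPair (f g : ℂ → ℂ) : Prop :=
  ∃ α β : ℂ → ℂ, IsRDisc α ∧ IsRDisc β ∧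
    ∀ z ∈ closedBall (0 : ℂ) 1, α z * f z + β z * g z = 1

/-- The pairs `(f₁,g₁)` and `(f₂,g₂)` are sign-linked. -/
def SignLinked (f₁ g₁ f₂ g₂ : ℂ → ℂ) : Prop :=
  ∀ x y : ℝ, x ∈ Set.Icc (-1 : ℝ) 1 → y ∈ Set.Icc (-1 : ℝ) 1 →
    f₁ (x : ℂ) * g₂ (x : ℂ) - f₂ (x : ℂ) * g₁ (x : ℂ) = 0 →
    f₁ (y : ℂ) * g₂ (y : ℂ) - f₂ (y : ℂ) * g₁ (y : ℂ) = 0 →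
    ∀ lam mu : ℝ,
      f₂ (x : ℂ) = (lam : ℂ) * f₁ (x : ℂ) → g₂ (x : ℂ) = (lam : ℂ) * g₁ (x : ℂ) →
      f₂ (y : ℂ) = (mu : ℂ) * f₁ (y : ℂ) → g₂ (y : ℂ) = (mu : ℂ) * g₁ (y : ℂ) →
      0 < lam * mu

/-- `f` has constant sign on the real zeros of `g`: the (real) values `f x` over
`x ∈ [-1,1]` with `g x = 0` are either all positive or all negative. -/
def ConstSignOnRealZeros (f g : ℂ → ℂ) : Prop :=
  (∀ x ∈ Set.Icc (-1 : ℝ) 1, g (x : ℂ) = 0 → 0 < (f (x : ℂ)).re) ∨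
  (∀ x ∈ Set.Icc (-1 : ℝ) 1, g (x : ℂ) = 0 → (f (x : ℂ)).re < 0)

theorem no_zeros_and_constant_sign_of_omitted_real_values (f : ℂ → ℂ) (hf : IsRDisc f)
    (hnonconst : ¬ ∃ c : ℂ, ∀ z ∈ closedBall (0 : ℂ) 1, f z = c)
    (x : ℕ → ℝ) (hx : Filter.Tendsto x Filter.atTop (nhds 0))
    (hmiss : ∀ n : ℕ, ((x n : ℂ)) ∉ f '' closedBall (0 : ℂ) 1) :
    (∀ z ∈ ball (0 : ℂ) 1, f z ≠ 0) ∧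
    ((∀ t ∈ Set.Ioo (-1 : ℝ) 1, 0 < (f (t : ℂ)).re) ∨
     (∀ t ∈ Set.Ioo (-1 : ℝ) 1, (f (t : ℂ)).re < 0)) := by
  have hball : (ball (0:ℂ) 1) ⊆ closedBall (0:ℂ) 1 := ball_subset_closedBall
  -- no zeros
  have hnozero : ∀ z ∈ ball (0 : ℂ) 1, f z ≠ 0 := by
    intro z₀ hz₀ hfz₀
    have han : AnalyticOnNhd ℂ f (ball (0:ℂ) 1) :=
      hf.2.1.analyticOnNhd isOpen_ball
    rcases han.is_constant_or_isOpen (convex_ball (0:ℂ) 1).isPreconnected with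
      ⟨w, hw⟩ | hopen
    · -- f constant on ball ⇒ constant on closedBall, contradiction
      apply hnonconst
      refine ⟨w, fun z hz => ?_⟩
      have hzcl : z ∈ closure (ball (0:ℂ) 1) := by
        rw [closure_ball (0:ℂ) one_ne_zero]; exact hz
      have hne : (nhdsWithin z (ball (0:ℂ) 1)).NeBot := mem_closure_iff_nhdsWithin_neBot.mp hzcl
      have hcont : ContinuousWithinAt f (ball (0:ℂ) 1) z :=
        (hf.1 z hz).mono hball
      have h1 : Filter.Tendsto f (nhdsWithin z (ball (0:ℂ) 1)) (nhds (f z)) := hcont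
      have h2 : Filter.Tendsto f (nhdsWithin z (ball (0:ℂ) 1)) (nhds w) := by
        apply Filter.Tendsto.congr' _ tendsto_const_nhds
        filter_upwards [self_mem_nhdsWithin] with u hu using (hw u hu).symm
      exact tendsto_nhds_unique h1 h2
    · have hOim : IsOpen (f '' ball (0:ℂ) 1) := hopen _ subset_rfl isOpen_ball
      have h0 : (0 : ℂ) ∈ f '' ball (0:ℂ) 1 := ⟨z₀, hz₀, hfz₀⟩
      have htend : Filter.Tendsto (fun n => ((x n : ℂ))) Filter.atTop (nhds (0:ℂ)) := by
        have := (Complex.continuous_ofReal.tendsto 0).comp hx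
        rw [Complex.ofReal_zero] at this
        exact this
      have := htend.eventually (hOim.mem_nhds h0)
      rcases this.exists with ⟨n, hn⟩
      exact hmiss n ((Set.image_mono hball) hn)
  refine ⟨hnozero, ?_⟩
  -- f is real-valued on (-1,1)
  have hreal : ∀ t ∈ Set.Ioo (-1:ℝ) 1, (f (t:ℂ)).im = 0 := by
    intro t ht
    have htm : (t:ℂ) ∈ closedBall (0:ℂ) 1 := by
      simp [Complex.norm_real, abs_le]
      constructor <;> linarith [ht.1, ht.2]
    have := hf.2.2 (t:ℂ) htm
    rw [Complex.conj_ofReal] at this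
    have him := congrArg Complex.im this
    simp at him
    linarith
  have hmem : ∀ t ∈ Set.Ioo (-1:ℝ) 1, (t:ℂ) ∈ ball (0:ℂ) 1 := by
    intro t ht
    simp [Complex.norm_real, abs_lt]
    exact ⟨ht.1, ht.2⟩
  have hne : ∀ t ∈ Set.Ioo (-1:ℝ) 1, (f (t:ℂ)).re ≠ 0 := by
    intro t ht h0
    apply hnozero _ (hmem t ht)
    exact Complex.ext h0 (hreal t ht)
  -- continuity of t ↦ (f t).re on Ioo
  have hcont : ContinuousOn (fun t : ℝ => (f (t:ℂ)).re) (Set.Ioo (-1:ℝ) 1) := by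
    apply Complex.continuous_re.comp_continuousOn
    apply (hf.1.mono hball).comp Complex.continuous_ofReal.continuousOn
    intro t ht
    exact hmem t ht
  by_contra hcon
  push_neg at hcon
  obtain ⟨⟨a, ha, hfa⟩, ⟨b, hb, hfb⟩⟩ := hcon
  have hfa' : (f (a:ℂ)).re < 0 := lt_of_le_of_ne hfa (hne a ha)
  have hfb' : 0 < (f (b:ℂ)).re := lt_of_le_of_ne hfb fun h => hne b hb h.symm
  have hsub : Set.uIcc a b ⊆ Set.Ioo (-1:ℝ) 1 := by
    exact Set.ordConnected_Ioo.uIcc_subset ha hb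
  have := intermediate_value_uIcc (hcont.mono hsub)
  have h0mem : (0:ℝ) ∈ Set.uIcc ((f (a:ℂ)).re) ((f (b:ℂ)).re) := by
    rw [Set.mem_uIcc]; left; exact ⟨hfa'.le, hfb'.le⟩
  rcases this h0mem with ⟨c, hc, hc0⟩
  exact hne c (hsub hc) hc0
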